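/- The cohomology of the dga Λ(2l) in odd degrees is spanned by the classes of y₁y₂^p for p ≥ 0, and in positive even degrees by the classes of α_p := y₂^p x₁ − 2p y₁x₂y₂^{p−1} for p ≥ 0; each nonzero cohomology group has dimension at most 1. -/

import Mathlib

namespace LoopSphereModel

noncomputable section

/-- Basis of the Sullivan model `Λ(2l) = Λ(y₁,x₁,y₂,x₂)` of the free loop space
`LS^{2l}`: `(e, a, p, f)` codes the monomial `y₁^e · x₁^a · y₂^p · x₂^f`
(`e, f ∈ {0,1}` since `y₁, x₂` are odd; `x₁, y₂` are even). -/
abbrev Bas : Type := Bool × ℕ × ℕ × Bool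

/-- The underlying ℚ-vector space of `Λ(2l)`. -/
abbrev Mod : Type := Bas →₀ ℚ

/-- The basis monomial `y₁^e x₁^a y₂^p x₂^f`. -/
def mon (b : Bas) : Mod := Finsupp.single b 1

/-- Degree of a basis monomial: `|y₁| = 2l-1`, `|x₁| = 2l`, `|y₂| = 4l-2`,
`|x₂| = 4l-1`. -/
def mdeg (l : ℕ) (b : Bas) : ℕ :=
  (if b.1 then 2 * l - 1 else 0) + b.2.1 * (2 * l) + b.2.2.1 * (4 * l - 2) +
    (if b.2.2.2 then 4 * l - 1 else 0)

/-- The differential on basis monomials, obtained by extending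
`dy₁ = dx₁ = 0`, `dx₂ = x₁²`, `dy₂ = -2x₁y₁` as a degree `+1` derivation:
`d(y₁^e x₁^a y₂^p x₂^f) = (-2p)·y₁ x₁^{a+1} y₂^{p-1} x₂^f` (only when `e = 0`)
`+ (-1)^e · y₁^e x₁^{a+2} y₂^p` (only when `f = 1`). -/
def dmon (b : Bas) : Mod :=
  (if b.1 then 0
    else (-(2 * (b.2.2.1 : ℚ))) • mon (true, b.2.1 + 1, b.2.2.1 - 1, b.2.2.2)) +
  (if b.2.2.2 then
      (if b.1 then (-1 : ℚ) else 1) • mon (b.1, b.2.1 + 2, b.2.2.1, false)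
    else 0)

/-- The differential of `Λ(2l)` as a linear map. -/
def dL : Mod →ₗ[ℚ] Mod :=
  Finsupp.lsum ℚ fun b => LinearMap.toSpanSingleton ℚ Mod (dmon b)

/-- Product of two basis monomials in the free graded-commutative algebra:
zero if an odd generator repeats, otherwise the reordered monomial with the
Koszul sign `(-1)^{e'·f}` (moving `y₁'` past `x₂^f`). -/
def monMul (b b' : Bas) : Mod :=
  if b.1 && b'.1 then 0
  else if b.2.2.2 && b'.2.2.2 then 0
  else (if b'.1 && b.2.2.2 then (-1 : ℚ) else 1) •
    mon (b.1 || b'.1, b.2.1 + b'.2.1, b.2.2.1 + b'.2.2.1, b.2.2.2 || b'.2.2.2)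

/-- The (graded-commutative) multiplication of `Λ(2l)`, extended bilinearly. -/
def mulF (x y : Mod) : Mod :=
  x.sum fun b c => y.sum fun b' c' => (c * c') • monMul b b'

/-- The cocycle `α_p := y₂^p x₁ - 2p · y₁ x₂ y₂^{p-1}`
(in canonical order `x₁ y₂^p - 2p · y₁ y₂^{p-1} x₂`). -/
def alphaEl (p : ℕ) : Mod :=
  mon (false, 1, p, false) - (2 * (p : ℚ)) • mon (true, 0, p - 1, true)

/-- The cocycle `β_p := y₁ y₂^p`. -/
def betaEl (p : ℕ) : Mod := mon (true, 0, p, false)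

/-- The degree-`i` homogeneous part of `Λ(2l)`. -/
def Dsub (l i : ℕ) : Submodule ℚ Mod := Finsupp.supported ℚ ℚ {b | mdeg l b = i}

/-- Degree-`i` cocycles of `Λ(2l)`. -/
def Zc (l i : ℕ) : Submodule ℚ Mod := Dsub l i ⊓ LinearMap.ker dL

/-- Degree-`i` cohomology `H^i(Λ(2l))`. -/
def Hc (l i : ℕ) : Type :=
  Zc l i ⧸ Submodule.comap (Zc l i).subtype (LinearMap.range dL ⊓ Dsub l i)

instance (l i : ℕ) : AddCommGroup (Hc l i) := by unfold Hc; infer_instance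
instance (l i : ℕ) : Module ℚ (Hc l i) := by unfold Hc; infer_instance

-- auxiliary maps on basis elements
def cmon (b : Bas) : Mod :=
  if b.2.2.2 then 0 else
  if 2 ≤ b.2.1 then (if b.1 then (-1:ℚ) else 1) • mon (b.1, b.2.1 - 2, b.2.2.1, true)
  else if b.1 ∧ b.2.1 = 1 then
    (-(1:ℚ)/(2*((b.2.2.1:ℚ)+1))) • mon (false, 0, b.2.2.1+1, false)
  else 0

def emon (b : Bas) : Mod :=
  if b.2.2.2 then 0 else
  if b.1 then
    (if 1 ≤ b.2.1 then
      (-(1:ℚ)/(2*((b.2.2.1:ℚ)+1))) • mon (false, b.2.1 - 1, b.2.2.1 + 1, false)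
     else 0)
  else (if 2 ≤ b.2.1 then mon (false, b.2.1 - 2, b.2.2.1, true) else 0)

def pimon (b : Bas) : Mod :=
  if b.2.2.2 then 0 else
  if b.1 then (if b.2.1 = 0 then mon (true, 0, b.2.2.1, false) else 0)
  else if b.2.1 = 0 then (if b.2.2.1 = 0 then mon (false,0,0,false) else 0)
  else if b.2.1 = 1 then alphaEl b.2.2.1
  else 0

def Cmap : Mod →ₗ[ℚ] Mod :=
  Finsupp.lsum ℚ fun b => LinearMap.toSpanSingleton ℚ Mod (cmon b)
def Emap : Mod →ₗ[ℚ] Mod :=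
  Finsupp.lsum ℚ fun b => LinearMap.toSpanSingleton ℚ Mod (emon b)
def Pmap : Mod →ₗ[ℚ] Mod :=
  Finsupp.lsum ℚ fun b => LinearMap.toSpanSingleton ℚ Mod (pimon b)

lemma dL_mon (b : Bas) : dL (mon b) = dmon b := by
  simp [dL, mon, Finsupp.lsum_single, LinearMap.toSpanSingleton_apply]
lemma Cmap_mon (b : Bas) : Cmap (mon b) = cmon b := by
  simp [Cmap, mon, Finsupp.lsum_single, LinearMap.toSpanSingleton_apply]
lemma Emap_mon (b : Bas) : Emap (mon b) = emon b := by
  simp [Emap, mon, Finsupp.lsum_single, LinearMap.toSpanSingleton_apply]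
lemma Pmap_mon (b : Bas) : Pmap (mon b) = pimon b := by
  simp [Pmap, mon, Finsupp.lsum_single, LinearMap.toSpanSingleton_apply]

-- equation lemmas
lemma cmon_f (e : Bool) (a p : ℕ) : cmon (e,a,p,true) = 0 := by simp [cmon]
lemma cmon_a2 (e : Bool) (a p : ℕ) :
    cmon (e,a+2,p,false) = (if e then (-1:ℚ) else 1) • mon (e,a,p,true) := by
  simp [cmon]
lemma cmon_t1 (p : ℕ) :
    cmon (true,1,p,false) = (-(1:ℚ)/(2*((p:ℚ)+1))) • mon (false, 0, p+1, false) := by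
  simp [cmon]
lemma cmon_0 (e : Bool) (p : ℕ) : cmon (e,0,p,false) = 0 := by simp [cmon]
lemma cmon_f1 (p : ℕ) : cmon (false,1,p,false) = 0 := by simp [cmon]

lemma emon_f (e : Bool) (a p : ℕ) : emon (e,a,p,true) = 0 := by simp [emon]
lemma emon_t (a p : ℕ) :
    emon (true,a+1,p,false)
      = (-(1:ℚ)/(2*((p:ℚ)+1))) • mon (false, a, p + 1, false) := by simp [emon]
lemma emon_t0 (p : ℕ) : emon (true,0,p,false) = 0 := by simp [emon]
lemma emon_fa (a p : ℕ) : emon (false,a+2,p,false) = mon (false, a, p, true) := by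
  simp [emon]
lemma emon_f0 (p : ℕ) : emon (false,0,p,false) = 0 := by simp [emon]
lemma emon_f1 (p : ℕ) : emon (false,1,p,false) = 0 := by simp [emon]

lemma pimon_f (e : Bool) (a p : ℕ) : pimon (e,a,p,true) = 0 := by simp [pimon]
lemma pimon_t0 (p : ℕ) : pimon (true,0,p,false) = mon (true,0,p,false) := by simp [pimon]
lemma pimon_t (a p : ℕ) : pimon (true,a+1,p,false) = 0 := by simp [pimon]
lemma pimon_00 : pimon (false,0,0,false) = mon (false,0,0,false) := by simp [pimon]
lemma pimon_0p (p : ℕ) : pimon (false,0,p+1,false) = 0 := by simp [pimon]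
lemma pimon_1 (p : ℕ) : pimon (false,1,p,false) = alphaEl p := by simp [pimon]
lemma pimon_a2 (p a : ℕ) : pimon (false,a+2,p,false) = 0 := by simp [pimon]

lemma dmon_ff (a p : ℕ) :
    dmon (false,a,p,false) = (-(2*(p:ℚ))) • mon (true,a+1,p-1,false) := by
  simp [dmon]
lemma dmon_tf (a p : ℕ) : dmon (true,a,p,false) = 0 := by simp [dmon]
lemma dmon_ft (a p : ℕ) :
    dmon (false,a,p,true)
      = (-(2*(p:ℚ))) • mon (true,a+1,p-1,true) + mon (false,a+2,p,false) := by
  simp [dmon]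
lemma dmon_tt (a p : ℕ) : dmon (true,a,p,true) = (-1:ℚ) • mon (true,a+2,p,false) := by
  simp [dmon]

lemma keyId (b : Bas) : mon b = pimon b + Cmap (dmon b) + dL (emon b) := by
  obtain ⟨e, a, p, f⟩ := b
  cases f
  · cases e
    · -- e = false, f = false
      match a, p with
      | 0, 0 =>
        rw [pimon_00, emon_f0, dmon_ff]
        simp
      | 0, (q+1) =>
        rw [pimon_0p, emon_f0, dmon_ff, map_smul, Cmap_mon, Nat.add_sub_cancel,
          zero_add, map_zero, add_zero, cmon_t1, smul_smul]
        have : -(2 * (((q+1 : ℕ)):ℚ)) * (-(1:ℚ)/(2*((q:ℚ)+1))) = 1 := by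
          push_cast; field_simp
        rw [this, one_smul]
      | 1, p =>
        rw [pimon_1, emon_f1, dmon_ff, map_zero, add_zero, map_smul, Cmap_mon]
        have hc : cmon (true,1+1,p-1,false) = (-1:ℚ) • mon (true,0,p-1,true) := by
          have := cmon_a2 true 0 (p-1)
          norm_num at this ⊢
          exact this
        rw [hc, smul_smul, alphaEl, show -(2*((p:ℕ):ℚ)) * -1 = 2*(p:ℚ) by push_cast; ring]
        abel
      | (q+2), p =>
        rw [pimon_a2, emon_fa, dmon_ff, map_smul, Cmap_mon, dL_mon, dmon_ft,
          show q+2+1 = (q+1)+2 from rfl, cmon_a2]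
        simp only [if_true, smul_smul, smul_add]
        rw [show (-(2 * ((p:ℕ):ℚ)) * -1) = 2*(p:ℚ) by push_cast; ring,
          show (-(2*((p:ℕ):ℚ))) • mon (true, q+1, p-1, true)
              = -((2*(p:ℚ)) • mon (true, q+1, p-1, true)) by
            push_cast; rw [neg_smul]]
        abel
    · -- e = true, f = false
      match a with
      | 0 =>
        rw [pimon_t0, emon_t0, dmon_tf]
        simp
      | (q+1) =>
        rw [pimon_t, emon_t, dmon_tf, map_zero, add_zero, zero_add, map_smul, dL_mon,
          dmon_ff, Nat.add_sub_cancel, smul_smul]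
        have : (-(1:ℚ)/(2*((p:ℚ)+1))) * -(2 * (((p+1:ℕ)):ℚ)) = 1 := by
          push_cast; field_simp
        rw [this, one_smul]
  · cases e
    · -- e = false, f = true
      rw [pimon_f, emon_f, dmon_ft, map_zero, add_zero, zero_add, map_add, map_smul,
        Cmap_mon, Cmap_mon, cmon_f, cmon_a2, smul_zero, zero_add, if_neg
          (by simp : ¬ (false = true)), one_smul]
    · rw [pimon_f, emon_f, dmon_tt, map_zero, add_zero, zero_add, map_smul, Cmap_mon,
        cmon_a2, if_pos rfl, smul_smul]
      norm_num

lemma keyLin (x : Mod) : x = Pmap x + Cmap (dL x) + dL (Emap x) := by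
  have h : (LinearMap.id : Mod →ₗ[ℚ] Mod) = Pmap + Cmap ∘ₗ dL + dL ∘ₗ Emap := by
    apply Finsupp.lhom_ext'
    intro b
    apply LinearMap.ext_ring
    simp only [LinearMap.coe_comp, Function.comp_apply, LinearMap.add_apply,
      LinearMap.id_coe, id_eq, Finsupp.lsingle_apply]
    rw [show Finsupp.single b (1:ℚ) = mon b from rfl, dL_mon, Emap_mon, Pmap_mon]
    exact keyId b
  conv_lhs => rw [← LinearMap.id_apply (R := ℚ) x, h]
  rfl

lemma Pmap_apply (x : Mod) : Pmap x = x.sum fun b c => c • pimon b := by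
  rw [Pmap, Finsupp.lsum_apply]
  exact Finsupp.sum_congr fun b _ => rfl

lemma mon_mem_Dsub {l i : ℕ} {b : Bas} (h : mdeg l b = i) : mon b ∈ Dsub l i :=
  Finsupp.single_mem_supported ℚ 1 h

lemma dL_beta (p : ℕ) : dL (betaEl p) = 0 := by
  rw [betaEl, dL_mon, dmon_tf]

lemma dL_alpha (p : ℕ) : dL (alphaEl p) = 0 := by
  rw [alphaEl, map_sub, map_smul, dL_mon, dL_mon, dmon_ff, dmon_tt, smul_smul]
  rw [show (2*(p:ℚ)) * -1 = -(2*(p:ℚ)) by ring, show (1:ℕ)+1 = 0+2 from rfl]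
  simp

lemma beta_mem_Zc {l i p : ℕ} (h : mdeg l (true,0,p,false) = i) : betaEl p ∈ Zc l i :=
  ⟨mon_mem_Dsub h, LinearMap.mem_ker.2 (dL_beta p)⟩

lemma mdeg_beta (l p : ℕ) : mdeg l (true,0,p,false) = 2*l-1 + p*(4*l-2) := by
  simp [mdeg]
lemma mdeg_alpha (l p : ℕ) : mdeg l (false,1,p,false) = 2*l + p*(4*l-2) := by
  simp [mdeg]
lemma mdeg_one (l : ℕ) : mdeg l (false,0,0,false) = 0 := by simp [mdeg]

lemma alpha_mem_Zc {l i p : ℕ} (hl : 1 ≤ l) (h : mdeg l (false,1,p,false) = i) :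
    alphaEl p ∈ Zc l i := by
  refine ⟨?_, LinearMap.mem_ker.2 (dL_alpha p)⟩
  rw [alphaEl]
  rcases Nat.eq_zero_or_pos p with rfl | hp
  · simp only [Nat.cast_zero, mul_zero, zero_smul, sub_zero]
    exact mon_mem_Dsub h
  · refine Submodule.sub_mem _ (mon_mem_Dsub h) (Submodule.smul_mem _ _ (mon_mem_Dsub ?_))
    rw [mdeg_alpha] at h
    have hk : p*(4*l-2) = (p-1)*(4*l-2) + (4*l-2) := by
      rcases Nat.exists_eq_add_of_le hp with ⟨q, rfl⟩
      simp [add_mul, Nat.add_comm]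
    have : mdeg l (true,0,p-1,true) = 2*l-1 + (p-1)*(4*l-2) + (4*l-1) := by
      simp [mdeg]
    rw [this]
    generalize hK : (p-1)*(4*l-2) = K at hk ⊢
    omega

lemma pimon_shape (b : Bas) :
    pimon b = 0 ∨ (∃ p, b = (true,0,p,false) ∧ pimon b = betaEl p)
      ∨ (b = ((false : Bool),(0:ℕ),(0:ℕ),(false : Bool))
          ∧ pimon b = mon (false,0,0,false))
      ∨ (∃ p, b = (false,1,p,false) ∧ pimon b = alphaEl p) := by
  obtain ⟨e, a, p, f⟩ := b
  cases f
  · cases e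
    · match a, p with
      | 0, 0 => exact Or.inr (Or.inr (Or.inl ⟨rfl, pimon_00⟩))
      | 0, (q+1) => exact Or.inl (pimon_0p q)
      | 1, p => exact Or.inr (Or.inr (Or.inr ⟨p, rfl, pimon_1 p⟩))
      | (q+2), p => exact Or.inl (pimon_a2 p q)
    · match a with
      | 0 => exact Or.inr (Or.inl ⟨p, rfl, pimon_t0 p⟩)
      | (q+1) => exact Or.inl (pimon_t q p)
  · exact Or.inl (pimon_f e a p)

lemma mem_span_pimon {l i : ℕ} {z : Mod} (hz : z ∈ Dsub l i) (M : Submodule ℚ Mod)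
    (h : ∀ b, mdeg l b = i → pimon b ∈ M) : Pmap z ∈ M := by
  rw [Pmap_apply]
  refine Submodule.sum_mem _ fun b hb => Submodule.smul_mem _ _ ?_
  exact h b ((Finsupp.mem_supported ℚ z).1 hz hb)

lemma cocycle_decomp {l i : ℕ} {z : Mod} (hz : z ∈ Zc l i) :
    z = Pmap z + dL (Emap z) := by
  have h := keyLin z
  rwa [LinearMap.mem_ker.1 hz.2, map_zero, add_zero] at h

lemma parity_beta (m p : ℕ) : ∃ k, mdeg (m+1) (true,0,p,false) = 2*k+1 := by
  refine ⟨m + p*(2*m+1), ?_⟩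
  rw [mdeg_beta, show 2*(m+1)-1 = 2*m+1 by omega, show 4*(m+1)-2 = 2*(2*m+1) by omega]
  ring

lemma parity_alpha (m p : ℕ) : ∃ k, mdeg (m+1) (false,1,p,false) = 2*k + (2*m+2) := by
  refine ⟨p*(2*m+1), ?_⟩
  rw [mdeg_alpha, show 4*(m+1)-2 = 2*(2*m+1) by omega]
  ring

lemma part_odd (l : ℕ) (hl : 1 ≤ l) (i : ℕ) (hi : Odd i) :
    Zc l i ≤ LinearMap.range dL ⊔
      Submodule.span ℚ
        {m : Mod | ∃ p, m = betaEl p ∧ mdeg l (true, 0, p, false) = i} := by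
  obtain ⟨m, rfl⟩ : ∃ m, l = m+1 := ⟨l-1, by omega⟩
  intro z hz
  have hP : Pmap z ∈ Submodule.span ℚ
      {w : Mod | ∃ p, w = betaEl p ∧ mdeg (m+1) (true, 0, p, false) = i} := by
    refine mem_span_pimon hz.1 _ fun b hb => ?_
    rcases pimon_shape b with h | ⟨p, rfl, h⟩ | ⟨rfl, h⟩ | ⟨p, rfl, h⟩
    · rw [h]; exact zero_mem _
    · rw [h]; exact Submodule.subset_span ⟨p, rfl, hb⟩
    · exfalso; rw [mdeg_one] at hb; rcases hi with ⟨k, hk⟩; omega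
    · exfalso
      obtain ⟨k, hk⟩ := parity_alpha m p
      rcases hi with ⟨k', hk'⟩
      omega
  exact Submodule.mem_sup.2
    ⟨dL (Emap z), ⟨Emap z, rfl⟩, Pmap z, hP, ((add_comm _ _).trans (cocycle_decomp hz).symm)⟩

lemma part_even (l : ℕ) (hl : 1 ≤ l) (i : ℕ) (h0 : 0 < i) (hi : Even i) :
    Zc l i ≤ LinearMap.range dL ⊔
      Submodule.span ℚ
        {m : Mod | ∃ p, m = alphaEl p ∧ 2 * l + p * (4 * l - 2) = i} := by
  obtain ⟨m, rfl⟩ : ∃ m, l = m+1 := ⟨l-1, by omega⟩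
  intro z hz
  have hP : Pmap z ∈ Submodule.span ℚ
      {w : Mod | ∃ p, w = alphaEl p ∧ 2 * (m+1) + p * (4 * (m+1) - 2) = i} := by
    refine mem_span_pimon hz.1 _ fun b hb => ?_
    rcases pimon_shape b with h | ⟨p, rfl, h⟩ | ⟨rfl, h⟩ | ⟨p, rfl, h⟩
    · rw [h]; exact zero_mem _
    · exfalso
      obtain ⟨k, hk⟩ := parity_beta m p
      rcases hi with ⟨k', hk'⟩
      omega
    · exfalso; rw [mdeg_one] at hb; omega
    · rw [h]
      rw [mdeg_alpha] at hb
      exact Submodule.subset_span ⟨p, rfl, hb⟩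
  exact Submodule.mem_sup.2
    ⟨dL (Emap z), ⟨Emap z, rfl⟩, Pmap z, hP, ((add_comm _ _).trans (cocycle_decomp hz).symm)⟩

lemma exists_v (l i : ℕ) (hl : 1 ≤ l) :
    ∃ v, v ∈ Zc l i ∧ ∀ b, mdeg l b = i → pimon b ∈ Submodule.span ℚ {v} := by
  obtain ⟨m, rfl⟩ : ∃ m, l = m+1 := ⟨l-1, by omega⟩
  by_cases h0 : i = 0
  · subst h0
    refine ⟨mon (false,0,0,false), ⟨mon_mem_Dsub (mdeg_one _), LinearMap.mem_ker.2 ?_⟩,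
      fun b hb => ?_⟩
    · rw [dL_mon, dmon_ff]; simp
    · rcases pimon_shape b with h | ⟨p, rfl, h⟩ | ⟨rfl, h⟩ | ⟨p, rfl, h⟩
      · rw [h]; exact zero_mem _
      · exfalso; obtain ⟨k, hk⟩ := parity_beta m p; omega
      · rw [h]; exact Submodule.mem_span_singleton_self _
      · exfalso; obtain ⟨k, hk⟩ := parity_alpha m p; omega
  · by_cases hbeta : ∃ p, mdeg (m+1) (true,0,p,false) = i
    · obtain ⟨p₀, hp₀⟩ := hbeta
      refine ⟨betaEl p₀, beta_mem_Zc hp₀, fun b hb => ?_⟩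
      rcases pimon_shape b with h | ⟨p, rfl, h⟩ | ⟨rfl, h⟩ | ⟨p, rfl, h⟩
      · rw [h]; exact zero_mem _
      · have : p = p₀ := by
          rw [mdeg_beta] at hb hp₀
          have h2 := hb.trans hp₀.symm
          have h3 : p * (4*(m+1)-2) = p₀ * (4*(m+1)-2) := by omega
          exact Nat.eq_of_mul_eq_mul_right (by omega) h3
        rw [h, this]; exact Submodule.mem_span_singleton_self _
      · exfalso; rw [mdeg_one] at hb; exact h0 hb.symm
      · exfalso
        obtain ⟨k, hk⟩ := parity_alpha m p
        obtain ⟨k', hk'⟩ := parity_beta m p₀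
        omega
    · by_cases halpha : ∃ p, mdeg (m+1) (false,1,p,false) = i
      · obtain ⟨p₀, hp₀⟩ := halpha
        refine ⟨alphaEl p₀, alpha_mem_Zc hl hp₀, fun b hb => ?_⟩
        rcases pimon_shape b with h | ⟨p, rfl, h⟩ | ⟨rfl, h⟩ | ⟨p, rfl, h⟩
        · rw [h]; exact zero_mem _
        · exact absurd ⟨p, hb⟩ hbeta
        · exfalso; rw [mdeg_one] at hb; exact h0 hb.symm
        · have : p = p₀ := by
            rw [mdeg_alpha] at hb hp₀
            have h2 := hb.trans hp₀.symm
            have h3 : p * (4*(m+1)-2) = p₀ * (4*(m+1)-2) := by omega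
            exact Nat.eq_of_mul_eq_mul_right (by omega) h3
          rw [h, this]; exact Submodule.mem_span_singleton_self _
      · refine ⟨0, zero_mem _, fun b hb => ?_⟩
        rcases pimon_shape b with h | ⟨p, rfl, h⟩ | ⟨rfl, h⟩ | ⟨p, rfl, h⟩
        · rw [h]; exact zero_mem _
        · exact absurd ⟨p, hb⟩ hbeta
        · exfalso; rw [mdeg_one] at hb; exact h0 hb.symm
        · exact absurd ⟨p, hb⟩ halpha


lemma rank_Hc (l i : ℕ) (hl : 1 ≤ l) : Module.rank ℚ (Hc l i) ≤ 1 := by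
  obtain ⟨v, hvZ, hv⟩ := exists_v l i hl
  rw [rank_le_one_iff]
  refine ⟨Submodule.Quotient.mk (⟨v, hvZ⟩ : Zc l i), fun w => ?_⟩
  obtain ⟨⟨z, hz⟩, rfl⟩ := Submodule.Quotient.mk_surjective _ w
  have hP : Pmap z ∈ Submodule.span ℚ {v} := mem_span_pimon hz.1 _ hv
  obtain ⟨c, hc⟩ := Submodule.mem_span_singleton.1 hP
  refine ⟨c, ?_⟩
  refine (Submodule.Quotient.mk_smul _ c _).symm.trans ((Submodule.Quotient.eq _).2 ?_)
  refine Submodule.mem_comap.2 ?_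
  have hev : (Zc l i).subtype (c • (⟨v, hvZ⟩ : Zc l i) - ⟨z, hz⟩) = c • v - z := rfl
  have hzd : c • v - z = dL (-(Emap z)) := by
    rw [hc, map_neg]
    have hd := cocycle_decomp hz
    nth_rewrite 2 [hd]
    abel
  refine ⟨⟨-(Emap z), ?_⟩, ?_⟩
  · rw [hev, hzd]
  · rw [hev]
    exact Submodule.sub_mem _ (Submodule.smul_mem _ _ hvZ.1) hz.1

theorem cohomology_of_loopSphereModel (l : ℕ) (hl : 1 ≤ l) :
    (∀ i, Odd i →
      Zc l i ≤ LinearMap.range dL ⊔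
        Submodule.span ℚ
          {m : Mod | ∃ p, m = betaEl p ∧ mdeg l (true, 0, p, false) = i}) ∧
    (∀ i, 0 < i → Even i →
      Zc l i ≤ LinearMap.range dL ⊔
        Submodule.span ℚ
          {m : Mod | ∃ p, m = alphaEl p ∧ 2 * l + p * (4 * l - 2) = i}) ∧
    (∀ i, Module.rank ℚ (Hc l i) ≤ 1) :=
  ⟨fun i hi => part_odd l hl i hi, fun i h0 hi => part_even l hl i h0 hi,
    fun i => rank_Hc l i hl⟩


end

end LoopSphereModel
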